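/- Let F₂ be the free group on two generators a and b. The endomorphism of F₂ determined by a ↦ aab and b ↦ ba (induced by the substitution ρ̃ = (aab, ba)) is not an automorphism of F₂, i.e., it is not bijective. -/

import Mathlib

private lemma lift_fix_zero (u v : Equiv.Perm (Fin 3)) (hu : u 0 = 0) (hv : v 0 = 0)
    (w : FreeGroup (Fin 2)) :
    (FreeGroup.lift (fun i : Fin 2 => if i = 0 then u else v)) w 0 = 0 := by
  induction w using FreeGroup.induction_on with
  | C1 => simp
  | of i =>
      have : (pure i : FreeGroup (Fin 2)) = FreeGroup.of i := rfl
      rw [FreeGroup.lift_apply_of]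
      fin_cases i <;> simpa using (by assumption)
  | inv_of i h =>
      rw [map_inv]
      have := congrArg (fun σ : Equiv.Perm (Fin 3) => σ⁻¹ 0) (rfl :
        (FreeGroup.lift (fun i : Fin 2 => if i = 0 then u else v)) (FreeGroup.of i) =
        (FreeGroup.lift (fun i : Fin 2 => if i = 0 then u else v)) (FreeGroup.of i))
      set σ := (FreeGroup.lift (fun i : Fin 2 => if i = 0 then u else v)) (FreeGroup.of i)
      have : σ⁻¹ 0 = σ⁻¹ (σ 0) := by rw [h]
      rw [this]; exact Equiv.symm_apply_apply σ 0
  | mul s t hs ht =>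
      rw [map_mul, Equiv.Perm.mul_apply, ht, hs]

/-- The endomorphism of the free group on two generators induced by the
substitution `ρ̃ = (a ↦ aab, b ↦ ba)` is not an automorphism. -/
theorem rho_tilde_not_invertible :
    let a : FreeGroup (Fin 2) := FreeGroup.of 0
    let b : FreeGroup (Fin 2) := FreeGroup.of 1
    let φ : FreeGroup (Fin 2) →* FreeGroup (Fin 2) :=
      FreeGroup.lift (fun i => if i = 0 then a * a * b else b * a)
    ¬ Function.Bijective φ := by
  intro a b φ hbij
  -- Permutation representation: a ↦ x = (0 1 2), b ↦ y = (0 1) in Perm (Fin 3).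
  set x : Equiv.Perm (Fin 3) := Equiv.swap 0 2 * Equiv.swap 0 1 with hx
  set y : Equiv.Perm (Fin 3) := Equiv.swap 0 1 with hy
  set f : FreeGroup (Fin 2) →* Equiv.Perm (Fin 3) :=
    FreeGroup.lift (fun i => if i = 0 then x else y) with hf
  set g : FreeGroup (Fin 2) →* Equiv.Perm (Fin 3) :=
    FreeGroup.lift (fun i : Fin 2 => if i = 0 then x * x * y else y * x) with hg
  have hcomp : f.comp φ = g := by
    apply FreeGroup.ext_hom
    intro i
    fin_cases i <;>
      simp [hf, hg, a, b, φ, FreeGroup.lift_apply_of]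
  obtain ⟨w, hw⟩ := hbij.2 a
  have h0 : f a 0 = 0 := by
    rw [← hw]
    have : f (φ w) = g w := by rw [← hcomp]; rfl
    rw [this, hg]
    apply lift_fix_zero
    · -- (x*x*y) 0 = 0
      simp [hx, hy, Equiv.Perm.mul_apply, Equiv.swap_apply_def]
    · simp [hx, hy, Equiv.Perm.mul_apply, Equiv.swap_apply_def]
  have h1 : f a 0 = 1 := by
    simp [hf, a, FreeGroup.lift_apply_of, hx, hy, Equiv.Perm.mul_apply, Equiv.swap_apply_def]
  rw [h0] at h1
  exact absurd h1 (by decide)
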